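/- Let k be a field and b₀ a positive integer. Consider the k-algebra homomorphism ψ : k[x,y,z,v] → k[x,v]/(x^{b₀+1}(x+v³)) determined by x ↦ x, v ↦ v, z ↦ −v·x^{b₀+1}, y ↦ v²·x^{b₀+1}. Then ψ is surjective and its kernel is the ideal of k[x,y,z,v] generated by the three polynomials z + v·x^{b₀+1}, y + v·z, and x^{b₀+2} + v·y. In particular, k[x,y,z,v]/(z + v x^{b₀+1}, y + v z, x^{b₀+2} + v y) is isomorphic as a k-algebra to k[x,v]/(x^{b₀+1}(x+v³)). -/

import Mathlib

open MvPolynomial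

set_option maxHeartbeats 1600000 in
/-- **Equation (5) in Lemma `MainLemma`.**
Let `k` be a field and `b₀ > 0`.  The `k`-algebra homomorphism
`ψ : k[x,y,z,v] → k[x,v]/(x^{b₀+1}(x+v³))` with `x ↦ x`, `y ↦ v²x^{b₀+1}`,
`z ↦ −vx^{b₀+1}`, `v ↦ v` is surjective and its kernel is the ideal
`(z + vx^{b₀+1}, y + vz, x^{b₀+2} + vy)`.  In particular
`k[x,y,z,v]/(z + vx^{b₀+1}, y + vz, x^{b₀+2} + vy) ≅ k[x,v]/(x^{b₀+1}(x+v³))`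
as `k`-algebras.  (Variables: in `Fin 4`, `0 = x`, `1 = y`, `2 = z`, `3 = v`;
in `Fin 2`, `0 = x`, `1 = v`.) -/
theorem psi_surjective_and_ker
    (k : Type*) [Field k] (b₀ : ℕ) (hb₀ : 0 < b₀)
    (J : Ideal (MvPolynomial (Fin 2) k))
    (hJ : J = Ideal.span {X 0 ^ (b₀ + 1) * (X 0 + X 1 ^ 3)})
    (ψ : MvPolynomial (Fin 4) k →ₐ[k] (MvPolynomial (Fin 2) k ⧸ J))
    (hψ : ψ = aeval
      ![Ideal.Quotient.mkₐ k J (X 0),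
        Ideal.Quotient.mkₐ k J (X 1 ^ 2 * X 0 ^ (b₀ + 1)),
        Ideal.Quotient.mkₐ k J (-(X 1) * X 0 ^ (b₀ + 1)),
        Ideal.Quotient.mkₐ k J (X 1)])
    (K : Ideal (MvPolynomial (Fin 4) k))
    (hK : K = Ideal.span {X 2 + X 3 * X 0 ^ (b₀ + 1),
                          X 1 + X 3 * X 2,
                          X 0 ^ (b₀ + 2) + X 3 * X 1}) :
    Function.Surjective ψ ∧ RingHom.ker ψ = K ∧
      Nonempty ((MvPolynomial (Fin 4) k ⧸ K) ≃ₐ[k] (MvPolynomial (Fin 2) k ⧸ J)) := by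
  -- values of ψ on the variables
  have hψ0 : ψ (X 0) = Ideal.Quotient.mk J (X 0) := by
    rw [hψ, aeval_X]; simp
  have hψ1 : ψ (X 1) = Ideal.Quotient.mk J (X 1 ^ 2 * X 0 ^ (b₀ + 1)) := by
    rw [hψ, aeval_X]; simp
  have hψ2 : ψ (X 2) = Ideal.Quotient.mk J (-(X 1) * X 0 ^ (b₀ + 1)) := by
    rw [hψ, aeval_X]; simp
  have hψ3 : ψ (X 3) = Ideal.Quotient.mk J (X 1) := by
    rw [hψ, aeval_X]; simp
  -- generators of K
  have hg1 : (X 2 + X 3 * X 0 ^ (b₀ + 1) : MvPolynomial (Fin 4) k) ∈ K := by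
    rw [hK]; exact Ideal.subset_span (by simp)
  have hg2 : (X 1 + X 3 * X 2 : MvPolynomial (Fin 4) k) ∈ K := by
    rw [hK]; exact Ideal.subset_span (by simp)
  have hg3 : (X 0 ^ (b₀ + 2) + X 3 * X 1 : MvPolynomial (Fin 4) k) ∈ K := by
    rw [hK]; exact Ideal.subset_span (by simp)
  have hy : (X 1 - X 3 ^ 2 * X 0 ^ (b₀ + 1) : MvPolynomial (Fin 4) k) ∈ K := by
    have h : (X 1 - X 3 ^ 2 * X 0 ^ (b₀ + 1) : MvPolynomial (Fin 4) k)
        = (X 1 + X 3 * X 2) - X 3 * (X 2 + X 3 * X 0 ^ (b₀ + 1)) := by ring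
    rw [h]
    exact Ideal.sub_mem _ hg2 (Ideal.mul_mem_left _ _ hg1)
  have hJK : (X 0 ^ (b₀ + 1) * (X 0 + X 3 ^ 3) : MvPolynomial (Fin 4) k) ∈ K := by
    have h : (X 0 ^ (b₀ + 1) * (X 0 + X 3 ^ 3) : MvPolynomial (Fin 4) k)
        = (X 0 ^ (b₀ + 2) + X 3 * X 1) - X 3 * (X 1 + X 3 * X 2)
          + X 3 ^ 2 * (X 2 + X 3 * X 0 ^ (b₀ + 1)) := by ring
    rw [h]
    exact Ideal.add_mem _ (Ideal.sub_mem _ hg3 (Ideal.mul_mem_left _ _ hg2))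
      (Ideal.mul_mem_left _ _ hg1)
  -- the section g : k[x,v] → k[x,y,z,v],  x ↦ x, v ↦ v
  set g : MvPolynomial (Fin 2) k →ₐ[k] MvPolynomial (Fin 4) k :=
    aeval ![X 0, X 3] with hgdef
  have hgx : g (X 0) = X 0 := by rw [hgdef, aeval_X]; simp
  have hgv : g (X 1) = X 3 := by rw [hgdef, aeval_X]; simp
  have hcomp1 : ψ.comp g = Ideal.Quotient.mkₐ k J := by
    apply MvPolynomial.algHom_ext
    intro i
    fin_cases i
    · show ψ (g (X 0)) = Ideal.Quotient.mkₐ k J (X 0)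
      rw [hgx, hψ0]; rfl
    · show ψ (g (X 1)) = Ideal.Quotient.mkₐ k J (X 1)
      rw [hgv, hψ3]; rfl
  -- surjectivity
  have hsurj : Function.Surjective ψ := by
    intro q
    obtain ⟨p, rfl⟩ := Ideal.Quotient.mk_surjective q
    refine ⟨g p, ?_⟩
    have := congrArg (fun f : MvPolynomial (Fin 2) k →ₐ[k] _ => f p) hcomp1
    simpa using this
  -- φ' kills J, giving φ on the quotient
  set φ' : MvPolynomial (Fin 2) k →ₐ[k] (MvPolynomial (Fin 4) k ⧸ K) :=
    (Ideal.Quotient.mkₐ k K).comp g with hφ'def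
  have hφ'gen : φ' (X 0 ^ (b₀ + 1) * (X 0 + X 1 ^ 3)) = 0 := by
    have hval : g (X 0 ^ (b₀ + 1) * (X 0 + X 1 ^ 3))
        = X 0 ^ (b₀ + 1) * (X 0 + X 3 ^ 3) := by
      rw [map_mul, map_pow, map_add, map_pow, hgx, hgv]
    rw [hφ'def, AlgHom.comp_apply, hval, Ideal.Quotient.mkₐ_eq_mk]
    exact (Ideal.Quotient.eq_zero_iff_mem).mpr hJK
  have hJker : ∀ a ∈ J, φ' a = 0 := by
    intro a ha
    rw [hJ, Ideal.mem_span_singleton] at ha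
    obtain ⟨c, rfl⟩ := ha
    rw [map_mul, hφ'gen, zero_mul]
  set φ : (MvPolynomial (Fin 2) k ⧸ J) →ₐ[k] (MvPolynomial (Fin 4) k ⧸ K) :=
    Ideal.Quotient.liftₐ J φ' hJker with hφdef
  have hφmk : ∀ p : MvPolynomial (Fin 2) k,
      φ (Ideal.Quotient.mk J p) = Ideal.Quotient.mk K (g p) := by
    intro p
    rw [hφdef, Ideal.Quotient.liftₐ_apply]
    erw [Ideal.Quotient.lift_mk]
  have hcomp2 : φ.comp ψ = Ideal.Quotient.mkₐ k K := by
    apply MvPolynomial.algHom_ext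
    intro i
    fin_cases i
    · show φ (ψ (X 0)) = Ideal.Quotient.mkₐ k K (X 0)
      rw [hψ0, hφmk, hgx]; rfl
    · show φ (ψ (X 1)) = Ideal.Quotient.mkₐ k K (X 1)
      rw [hψ1, hφmk, map_mul, map_pow, map_pow, hgx, hgv, Ideal.Quotient.mkₐ_eq_mk]
      refine Ideal.Quotient.eq.mpr ?_
      have h : (X 3 ^ 2 * X 0 ^ (b₀ + 1) - X 1 : MvPolynomial (Fin 4) k)
          = -(X 1 - X 3 ^ 2 * X 0 ^ (b₀ + 1)) := by ring
      rw [h]; exact neg_mem hy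
    · show φ (ψ (X 2)) = Ideal.Quotient.mkₐ k K (X 2)
      rw [hψ2, hφmk, map_mul, map_pow, map_neg, hgx, hgv, Ideal.Quotient.mkₐ_eq_mk]
      refine Ideal.Quotient.eq.mpr ?_
      have h : (-(X 3) * X 0 ^ (b₀ + 1) - X 2 : MvPolynomial (Fin 4) k)
          = -(X 2 + X 3 * X 0 ^ (b₀ + 1)) := by ring
      rw [h]; exact neg_mem hg1
    · show φ (ψ (X 3)) = Ideal.Quotient.mkₐ k K (X 3)
      rw [hψ3, hφmk, hgv]; rfl
  -- kernel computation
  clear_value φ φ' g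
  clear hφmk hφ'gen hJker hφ'def hφdef hgdef hgx hgv hcomp1 φ' g
  have hker : RingHom.ker ψ = K := by
    apply le_antisymm
    · intro p hp
      have hp0 : ψ p = 0 := hp
      have := congrArg (fun f : MvPolynomial (Fin 4) k →ₐ[k] _ => f p) hcomp2
      simp only [AlgHom.comp_apply, hp0, map_zero, Ideal.Quotient.mkₐ_eq_mk] at this
      exact (Ideal.Quotient.eq_zero_iff_mem).mp this.symm
    · rw [hK, Ideal.span_le]
      intro q hq
      simp only [Set.mem_insert_iff, Set.mem_singleton_iff] at hq
      have hz : ∀ r : MvPolynomial (Fin 4) k, ψ r = 0 → r ∈ RingHom.ker ψ := fun r h => h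
      rcases hq with rfl | rfl | rfl
      · apply hz
        rw [map_add, map_mul, map_pow, hψ0, hψ2, hψ3, ← map_pow, ← map_mul, ← map_add]
        rw [show (-(X 1) * X 0 ^ (b₀ + 1) + X 1 * X 0 ^ (b₀ + 1) : MvPolynomial (Fin 2) k) = 0
          by ring, map_zero]
      · apply hz
        rw [map_add, map_mul, hψ1, hψ2, hψ3, ← map_mul, ← map_add]
        rw [show (X 1 ^ 2 * X 0 ^ (b₀ + 1) + X 1 * (-(X 1) * X 0 ^ (b₀ + 1))
            : MvPolynomial (Fin 2) k) = 0 by ring, map_zero]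
      · apply hz
        rw [map_add, map_mul, map_pow, hψ0, hψ1, hψ3, ← map_pow, ← map_mul, ← map_add]
        refine (Ideal.Quotient.eq_zero_iff_mem).mpr ?_
        have h : (X 0 ^ (b₀ + 2) + X 1 * (X 1 ^ 2 * X 0 ^ (b₀ + 1)) : MvPolynomial (Fin 2) k)
            = X 0 ^ (b₀ + 1) * (X 0 + X 1 ^ 3) := by ring
        rw [h, hJ]
        exact Ideal.subset_span rfl
  refine ⟨hsurj, hker, ?_⟩
  rw [← hker]
  exact ⟨Ideal.quotientKerAlgEquivOfSurjective hsurj⟩
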